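/- Let K : S × S → ℝ be a bounded symmetric measurable kernel (not depending on its second measure argument), F a probability measure on S, and X_1,…,X_m independent random variables each distributed according to F, with empirical measure F̂_m. Then the risk of the empirical distribution function satisfies E[d_K(F, F̂_m)] = (1/m) · trace_F(K_{cen(F)}), where trace_F(K_{cen(F)}) = ∫ K_{cen(F)}(x,x) dF(x). -/

import Mathlib

open MeasureTheory ProbabilityTheory

/-- The quadratic distance d_K(F,G) = ∬ K(s,t) d(F−G)(s) d(F−G)(t), written as the
iterated integral of s ↦ ∫ K(s,t) d(F−G)(t) against the signed measure F−G. -/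
noncomputable def quadDist {S : Type*} [MeasurableSpace S] (K : S → S → ℝ)
    (F G : Measure S) : ℝ :=
  (∫ s, (∫ t, K s t ∂F - ∫ t, K s t ∂G) ∂F) - ∫ s, (∫ t, K s t ∂F - ∫ t, K s t ∂G) ∂G

/-- The G-centered kernel
K_{cen(G)}(x,y) = K(x,y) − K(x,G) − K(G,y) + K(G,G). -/
noncomputable def kcen {S : Type*} [MeasurableSpace S] (K : S → S → ℝ) (G : Measure S)
    (x y : S) : ℝ :=
  K x y - ∫ t, K x t ∂G - ∫ s, K s y ∂G + ∫ s, ∫ t, K s t ∂G ∂G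

/-- The empirical measure of x_1,…,x_m, assigning mass 1/m to each observation. -/
noncomputable def empiricalMeasure {S : Type*} [MeasurableSpace S] (m : ℕ)
    (x : Fin m → S) : Measure S :=
  ((m : ENNReal))⁻¹ • ∑ i, Measure.dirac (x i)

/-- for X_1,…,X_m i.i.d. with law F and F̂_m the empirical measure,
E[d_K(F, F̂_m)] = (1/m) · trace_F(K_{cen(F)}), where
trace_F(K_{cen(F)}) = ∫ K_{cen(F)}(x,x) dF(x). -/

lemma integrable_of_bound {α : Type*} [MeasurableSpace α] (μ : Measure α) [IsFiniteMeasure μ]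
    {f : α → ℝ} (hf : AEStronglyMeasurable f μ) {C : ℝ} (hC : ∀ x, |f x| ≤ C) :
    Integrable f μ :=
  (integrable_const C).mono' hf (ae_of_all _ fun x => by simpa [Real.norm_eq_abs] using hC x)

lemma integral_empiricalMeasure' {S : Type*} [MeasurableSpace S] (m : ℕ) (x : Fin m → S)
    {f : S → ℝ} (hf : StronglyMeasurable f) :
    ∫ s, f s ∂(((m : ENNReal))⁻¹ • ∑ i, Measure.dirac (x i)) = (m : ℝ)⁻¹ * ∑ i, f (x i) := by
  have hint : ∀ i ∈ Finset.univ, Integrable f (Measure.dirac (x i)) := by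
    intro i _
    refine ⟨hf.aestronglyMeasurable, ?_⟩
    rw [HasFiniteIntegral, lintegral_dirac' _ hf.measurable.enorm]
    exact ENNReal.coe_lt_top
  rw [integral_smul_measure, integral_finset_sum_measure hint]
  simp [integral_dirac' f _ hf, ENNReal.toReal_inv]

section Main
variable {S Ω : Type*} [MeasurableSpace S] [MeasurableSpace Ω]
    (P : Measure Ω) [IsProbabilityMeasure P]
    (F : Measure S) [IsProbabilityMeasure F]
    (K : S → S → ℝ)

theorem empirical_risk'
    (hKmeas : Measurable (Function.uncurry K))
    (hKbdd : ∃ C : ℝ, ∀ x y, |K x y| ≤ C)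
    (hKsymm : ∀ x y, K x y = K y x)
    (m : ℕ) (hm : 0 < m) (X : Fin m → Ω → S)
    (hXmeas : ∀ i, Measurable (X i))
    (hXindep : iIndepFun X P)
    (hXdist : ∀ i, Measure.map (X i) P = F) :
    ∫ ω, ((∫ s, (∫ t, K s t ∂F - ∫ t, K s t ∂(((m : ENNReal))⁻¹ • ∑ i, Measure.dirac (X i ω))) ∂F)
        - ∫ s, (∫ t, K s t ∂F - ∫ t, K s t ∂(((m : ENNReal))⁻¹ • ∑ i, Measure.dirac (X i ω)))
            ∂(((m : ENNReal))⁻¹ • ∑ i, Measure.dirac (X i ω))) ∂P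
      = (1 / (m : ℝ)) * ∫ x, (K x x - ∫ t, K x t ∂F - ∫ s, K s x ∂F + ∫ s, ∫ t, K s t ∂F ∂F) ∂F := by
  obtain ⟨C, hC⟩ := hKbdd
  have hm' : (m : ℝ) ≠ 0 := Nat.cast_ne_zero.mpr hm.ne'
  have hKsm : StronglyMeasurable (Function.uncurry K) := hKmeas.stronglyMeasurable
  set a : S → ℝ := fun x => ∫ t, K x t ∂F with ha_def
  have ha_sm : StronglyMeasurable a := hKsm.integral_prod_right'
  have hKx_sm : ∀ y : S, StronglyMeasurable fun s => K s y := fun y =>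
    hKsm.comp_measurable (measurable_id.prodMk measurable_const)
  have hKy_sm : ∀ s : S, StronglyMeasurable fun y => K s y := fun s =>
    hKsm.comp_measurable (measurable_const.prodMk measurable_id)
  have hKint : ∀ y : S, Integrable (fun s => K s y) F := fun y =>
    integrable_of_bound F (hKx_sm y).aestronglyMeasurable (fun s => hC s y)
  have hKint' : ∀ s : S, Integrable (fun y => K s y) F := fun s =>
    integrable_of_bound F (hKy_sm s).aestronglyMeasurable (fun y => hC s y)
  have ha_bd : ∀ x, |a x| ≤ |C| := by
    intro x
    calc |a x| = ‖∫ t, K x t ∂F‖ := rfl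
      _ ≤ ∫ t, |C| ∂F := norm_integral_le_of_norm_le (integrable_const _)
          (ae_of_all _ fun t => by
            simpa [Real.norm_eq_abs] using (hC x t).trans (le_abs_self C))
      _ = |C| := by simp
  have ha_int : Integrable a F := integrable_of_bound F ha_sm.aestronglyMeasurable ha_bd
  set b : ℝ := ∫ s, a s ∂F with hb_def
  set T : ℝ := ∫ x, K x x ∂F with hT_def
  have ha2 : ∀ x, (∫ s, K s x ∂F) = a x := fun x => by
    rw [ha_def]; exact integral_congr_ae (ae_of_all _ fun s => hKsymm s x)
  -- per-sample formula
  have hquad : ∀ x : Fin m → S,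
      ((∫ s, (∫ t, K s t ∂F - ∫ t, K s t ∂(((m : ENNReal))⁻¹ • ∑ i, Measure.dirac (x i))) ∂F)
        - ∫ s, (∫ t, K s t ∂F - ∫ t, K s t ∂(((m : ENNReal))⁻¹ • ∑ i, Measure.dirac (x i)))
            ∂(((m : ENNReal))⁻¹ • ∑ i, Measure.dirac (x i)))
      = b - (m : ℝ)⁻¹ * ∑ i, a (x i)
        - (m : ℝ)⁻¹ * ∑ j, (a (x j) - (m : ℝ)⁻¹ * ∑ i, K (x j) (x i)) := by
    intro x
    have hg : ∀ s, (∫ t, K s t ∂(((m : ENNReal))⁻¹ • ∑ i, Measure.dirac (x i)))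
        = (m : ℝ)⁻¹ * ∑ i, K s (x i) := fun s => integral_empiricalMeasure' m x (hKy_sm s)
    have hgsm : StronglyMeasurable fun s => (m : ℝ)⁻¹ * ∑ i, K s (x i) :=
      (Finset.stronglyMeasurable_fun_sum _ fun i _ => hKx_sm (x i)).const_mul _
    have hg_bd : ∀ s, |(m : ℝ)⁻¹ * ∑ i, K s (x i)| ≤ |C| := by
      intro s
      rw [abs_mul]
      calc |(m : ℝ)⁻¹| * |∑ i, K s (x i)| ≤ (m : ℝ)⁻¹ * ((m : ℝ) * |C|) := by
            apply mul_le_mul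
            · exact le_of_eq (abs_of_nonneg (by positivity))
            · calc |∑ i, K s (x i)| ≤ ∑ i, |K s (x i)| := Finset.abs_sum_le_sum_abs _ _
                _ ≤ ∑ _i : Fin m, |C| := Finset.sum_le_sum fun i _ =>
                    (hC s (x i)).trans (le_abs_self C)
                _ = (m : ℝ) * |C| := by simp [mul_comm]
            · positivity
            · positivity
        _ = |C| := by rw [inv_mul_cancel_left₀ hm']
    have hg_int : Integrable (fun s => (m : ℝ)⁻¹ * ∑ i, K s (x i)) F :=
      integrable_of_bound F hgsm.aestronglyMeasurable hg_bd
    have ha_eq : ∀ s : S, (∫ t, K s t ∂F) = a s := fun s => by rw [ha_def]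
    have hfg_sm : StronglyMeasurable fun s => a s - (m : ℝ)⁻¹ * ∑ i, K s (x i) :=
      ha_sm.sub hgsm
    simp_rw [hg, ha_eq]
    rw [integral_sub ha_int hg_int,
      integral_empiricalMeasure' m x hfg_sm, ← hb_def,
      integral_const_mul, integral_finset_sum _ fun i _ => hKint (x i)]
    simp_rw [ha2]
  -- integrability over Ω
  have hA_int : ∀ i, Integrable (fun ω => a (X i ω)) P := fun i =>
    integrable_of_bound P ((ha_sm.comp_measurable (hXmeas i)).aestronglyMeasurable)
      fun ω => ha_bd _
  have hA_val : ∀ i, ∫ ω, a (X i ω) ∂P = b := by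
    intro i
    calc ∫ ω, a (X i ω) ∂P = ∫ y, a y ∂(Measure.map (X i) P) :=
        (integral_map (hXmeas i).aemeasurable ha_sm.aestronglyMeasurable).symm
      _ = b := by rw [hXdist i]
  have hK_int : ∀ i j, Integrable (fun ω => K (X i ω) (X j ω)) P := fun i j =>
    integrable_of_bound P
      ((hKsm.comp_measurable ((hXmeas i).prodMk (hXmeas j))).aestronglyMeasurable)
      fun ω => hC _ _
  have hK_diag : ∀ i, ∫ ω, K (X i ω) (X i ω) ∂P = T := by
    intro i
    have hd : StronglyMeasurable fun x : S => K x x :=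
      hKsm.comp_measurable (measurable_id.prodMk measurable_id)
    calc ∫ ω, K (X i ω) (X i ω) ∂P = ∫ y, K y y ∂(Measure.map (X i) P) :=
        (integral_map (hXmeas i).aemeasurable hd.aestronglyMeasurable).symm
      _ = T := by rw [hXdist i]
  have hK_off : ∀ i j, i ≠ j → ∫ ω, K (X i ω) (X j ω) ∂P = b := by
    intro i j hij
    have hmap : Measure.map (fun ω => (X i ω, X j ω)) P = F.prod F := by
      rw [(indepFun_iff_map_prod_eq_prod_map_map (hXmeas i).aemeasurable
        (hXmeas j).aemeasurable).mp (hXindep.indepFun hij), hXdist i, hXdist j]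
    have hKK : Integrable (Function.uncurry K) (F.prod F) :=
      integrable_of_bound _ hKsm.aestronglyMeasurable fun p => hC p.1 p.2
    calc ∫ ω, K (X i ω) (X j ω) ∂P
        = ∫ p, Function.uncurry K p ∂(Measure.map (fun ω => (X i ω, X j ω)) P) :=
          (integral_map ((hXmeas i).prodMk (hXmeas j)).aemeasurable
            hKsm.aestronglyMeasurable).symm
      _ = ∫ p, Function.uncurry K p ∂(F.prod F) := by rw [hmap]
      _ = ∫ s, ∫ t, K s t ∂F ∂F := integral_prod _ hKK
      _ = b := by rw [hb_def]
  have hKval : ∀ j i : Fin m, ∫ ω, K (X j ω) (X i ω) ∂P = if j = i then T else b := by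
    intro j i
    by_cases h : j = i
    · subst h; simp [hK_diag j]
    · simp [h, hK_off j i h]
  -- compute the expectation
  simp_rw [hquad]
  have hS1 : Integrable (fun ω => ∑ i, a (X i ω)) P :=
    integrable_finset_sum _ fun i _ => hA_int i
  have hS2 : Integrable (fun ω => ∑ j, (a (X j ω) - (m : ℝ)⁻¹ * ∑ i, K (X j ω) (X i ω))) P :=
    integrable_finset_sum _ fun j _ =>
      (hA_int j).sub ((integrable_finset_sum _ fun i _ => hK_int j i).const_mul _)
  have hI1 : Integrable (fun ω => (m : ℝ)⁻¹ * ∑ i, a (X i ω)) P := hS1.const_mul _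
  have hI2 : Integrable
      (fun ω => (m : ℝ)⁻¹ * ∑ j, (a (X j ω) - (m : ℝ)⁻¹ * ∑ i, K (X j ω) (X i ω))) P :=
    hS2.const_mul _
  have hI0 : Integrable (fun ω => b - (m : ℝ)⁻¹ * ∑ i, a (X i ω)) P :=
    (integrable_const b).sub hI1
  rw [integral_sub hI0 hI2,
    integral_sub (integrable_const b) hI1, integral_const,
    integral_const_mul, integral_finset_sum _ fun i _ => hA_int i,
    integral_const_mul]
  have hterm_int : ∀ j ∈ Finset.univ,
      Integrable (fun ω => a (X j ω) - (m : ℝ)⁻¹ * ∑ i, K (X j ω) (X i ω)) P := fun j _ =>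
    (hA_int j).sub ((integrable_finset_sum _ fun i _ => hK_int j i).const_mul _)
  rw [integral_finset_sum _ hterm_int]
  have hterm : ∀ j : Fin m, ∫ ω, (a (X j ω) - (m : ℝ)⁻¹ * ∑ i, K (X j ω) (X i ω)) ∂P
      = b - (m : ℝ)⁻¹ * (T + ((m : ℝ) - 1) * b) := by
    intro j
    have hKj : Integrable (fun ω => (m : ℝ)⁻¹ * ∑ i, K (X j ω) (X i ω)) P :=
      (integrable_finset_sum _ fun i _ => hK_int j i).const_mul _
    rw [integral_sub (hA_int j) hKj,
      hA_val j, integral_const_mul, integral_finset_sum _ fun i _ => hK_int j i]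
    congr 2
    calc ∑ i, ∫ ω, K (X j ω) (X i ω) ∂P = ∑ i, ((if j = i then T - b else 0) + b) := by
          refine Finset.sum_congr rfl fun i _ => ?_
          rw [hKval j i]; by_cases h : j = i <;> simp [h]
      _ = T + ((m : ℝ) - 1) * b := by
          rw [Finset.sum_add_distrib, Finset.sum_ite_eq]
          simp; ring
  simp_rw [hterm, hA_val]
  simp only [Finset.sum_const, Finset.card_univ, Fintype.card_fin, nsmul_eq_mul, smul_eq_mul, probReal_univ]
  -- compute the RHS integral
  have hd_int : Integrable (fun x => K x x) F :=
    integrable_of_bound F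
      ((hKsm.comp_measurable (measurable_id.prodMk measurable_id)).aestronglyMeasurable)
      fun x => (hC x x).trans (le_abs_self C)
  have hrhs : ∫ x, (K x x - ∫ t, K x t ∂F - ∫ s, K s x ∂F + b) ∂F = T - b := by
    have ha_eq : ∀ s : S, (∫ t, K s t ∂F) = a s := fun s => by rw [ha_def]
    have h1 : Integrable (fun x => K x x - a x) F := hd_int.sub ha_int
    have h2 : Integrable (fun x => K x x - a x - a x) F := h1.sub ha_int
    simp_rw [ha_eq, ha2]
    rw [integral_add h2 (integrable_const b), integral_sub h1 ha_int,
      integral_sub hd_int ha_int, integral_const, ← hT_def, ← hb_def]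
    simp
  rw [hrhs]
  field_simp
  ring

end Main

theorem empirical_risk {S Ω : Type*} [MeasurableSpace S] [MeasurableSpace Ω]
    (P : Measure Ω) [IsProbabilityMeasure P]
    (F : Measure S) [IsProbabilityMeasure F]
    (K : S → S → ℝ)
    (hKmeas : Measurable (Function.uncurry K))
    (hKbdd : ∃ C : ℝ, ∀ x y, |K x y| ≤ C)
    (hKsymm : ∀ x y, K x y = K y x)
    (m : ℕ) (hm : 0 < m) (X : Fin m → Ω → S)
    (hXmeas : ∀ i, Measurable (X i))
    (hXindep : iIndepFun X P)
    (hXdist : ∀ i, Measure.map (X i) P = F) :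
    ∫ ω, quadDist K F (empiricalMeasure m (fun i => X i ω)) ∂P
      = (1 / (m : ℝ)) * ∫ x, kcen K F x x ∂F := by
  simp only [quadDist, empiricalMeasure, kcen]
  exact empirical_risk' P F K hKmeas hKbdd hKsymm m hm X hXmeas hXindep hXdist
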